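/- Let α > 1 and let a_n = n^{1/α − 1} (taking slowly varying function ℓ ≡ 1, so b_n = n^{1/α}). For every m ≥ 1, the m-fold convolution partial sums satisfy lim_{n→∞} (1/n^{m/α}) Σ_{k=m}^n a^{*m}_k = α Γ(1/α)^m / (m Γ(m/α)), where a^{*m} is the m-fold convolution of the sequence (a_n) with itself, (x*y)_n = Σ_{j=0}^n x_j y_{n−j} (with a_0 := 0). -/

import Mathlib

open Filter
set_option maxHeartbeats 1000000

/-- Convolution of two real sequences: `(x*y)_n = Σ_{j=0}^n x_j y_{n−j}`. -/
noncomputable def seqConv (x y : ℕ → ℝ) (n : ℕ) : ℝ :=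
  ∑ j ∈ Finset.range (n + 1), x j * y (n - j)

/-- The `m`-fold convolution power of a sequence (`convPow a 1 = a`,
`convPow a (k+1) = a * convPow a k`; `convPow a 0` is the convolution identity `δ_0`). -/
noncomputable def convPow (a : ℕ → ℝ) : ℕ → ℕ → ℝ
  | 0 => fun n => if n = 0 then 1 else 0
  | (k + 1) => seqConv a (convPow a k)

section AuxProof
open MeasureTheory Real Set


lemma beta_eqon {p q : ℝ} : Set.EqOn (fun x : ℝ => ((x:ℂ) ^ ((p:ℂ)-1) * ((1:ℂ)-x) ^ ((q:ℂ)-1)))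
    (fun x : ℝ => (((x ^ (p-1) * (1-x) ^ (q-1) : ℝ) : ℂ))) (Set.Icc 0 1) := by
  intro x hx
  simp only [Set.mem_Icc] at hx
  have h1 : ((x:ℂ)) ^ ((p:ℂ)-1) = ((x ^ (p-1) : ℝ) : ℂ) := by
    rw [Complex.ofReal_cpow hx.1]; norm_num
  have h2 : ((1:ℂ)-(x:ℂ)) ^ ((q:ℂ)-1) = (((1-x) ^ (q-1) : ℝ) : ℂ) := by
    rw [show ((1:ℂ)-(x:ℂ)) = (((1-x:ℝ)):ℂ) by push_cast; ring,
      Complex.ofReal_cpow (by linarith [hx.2])]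
    norm_num
  simp only [h1, h2]; push_cast; ring

lemma beta_integrableOn {p q : ℝ} (hp : 0 < p) (hq : 0 < q) :
    IntegrableOn (fun t : ℝ => t ^ (p-1) * (1-t) ^ (q-1)) (Set.Ioc 0 1) := by
  have h := Complex.betaIntegral_convergent (u := (p:ℂ)) (v := (q:ℂ)) (by simpa) (by simpa)
  have h2 : IntegrableOn (fun x : ℝ => ((x:ℂ) ^ ((p:ℂ)-1) * ((1:ℂ)-x) ^ ((q:ℂ)-1)))
      (Set.Ioc 0 1) := h.1
  have h3 := h2.congr_fun (beta_eqon.mono Set.Ioc_subset_Icc_self) measurableSet_Ioc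
  have h4 : IntegrableOn (fun x : ℝ => (((x ^ (p-1) * (1-x) ^ (q-1) : ℝ) : ℂ)).re)
      (Set.Ioc 0 1) := h3.re
  exact h4.congr_fun (fun x _ => by simp) measurableSet_Ioc

lemma beta_value {p q : ℝ} (hp : 0 < p) (hq : 0 < q) :
    ∫ t in Set.Ioc (0:ℝ) 1, t ^ (p-1) * (1-t) ^ (q-1)
      = Real.Gamma p * Real.Gamma q / Real.Gamma (p+q) := by
  have hof : ((∫ t in Set.Ioc (0:ℝ) 1, t ^ (p-1) * (1-t) ^ (q-1) : ℝ) : ℂ)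
      = Complex.betaIntegral p q := by
    rw [Complex.betaIntegral]
    rw [intervalIntegral.integral_of_le (by norm_num : (0:ℝ) ≤ 1)]
    rw [show ((∫ t in Set.Ioc (0:ℝ) 1, t ^ (p-1) * (1-t) ^ (q-1) : ℝ) : ℂ)
        = ∫ t in Set.Ioc (0:ℝ) 1, ((t ^ (p-1) * (1-t) ^ (q-1) : ℝ) : ℂ) from
      (integral_ofReal (𝕜 := ℂ)).symm]
    apply setIntegral_congr_fun measurableSet_Ioc
    exact fun x hx => (beta_eqon (Set.Ioc_subset_Icc_self hx)).symm
  have hβ : Complex.betaIntegral p q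
      = Complex.Gamma p * Complex.Gamma q / Complex.Gamma (p+q) := by
    have hne : Complex.Gamma ((p:ℂ)+(q:ℂ)) ≠ 0 := by
      rw [show ((p:ℂ)+(q:ℂ)) = ((p+q : ℝ) : ℂ) by push_cast; ring, Complex.Gamma_ofReal]
      simpa using Real.Gamma_pos_of_pos (by linarith) |>.ne'
    field_simp
    rw [mul_comm]
    exact (Complex.Gamma_mul_Gamma_eq_betaIntegral (by simpa) (by simpa)).symm
  rw [hβ] at hof
  have : ((Real.Gamma p * Real.Gamma q / Real.Gamma (p+q) : ℝ) : ℂ)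
      = Complex.Gamma p * Complex.Gamma q / Complex.Gamma (p+q) := by
    push_cast [← Complex.Gamma_ofReal]; norm_num
  rw [← this] at hof
  exact_mod_cast hof


noncomputable def stepv (p q : ℝ) (h : ℕ → ℝ) (n j : ℕ) : ℝ :=
  if j ∈ Finset.Ioo 0 n then ((j:ℝ)/n) ^ (p-1) * (((n-j : ℕ):ℝ)/n) ^ (q-1) * h (n-j) else 0

noncomputable def stepf (p q : ℝ) (h : ℕ → ℝ) (n : ℕ) (t : ℝ) : ℝ :=
  stepv p q h n ⌈(n:ℝ) * t⌉₊

lemma stepf_integral (p q : ℝ) (h : ℕ → ℝ) {n : ℕ} (hn : 1 ≤ n) :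
    ∫ t in Set.Ioc (0:ℝ) 1, stepf p q h n t
      = (1/(n:ℝ)) * ∑ j ∈ Finset.Ioo 0 n, ((j:ℝ)/n) ^ (p-1) * (((n-j : ℕ):ℝ)/n) ^ (q-1) * h (n-j) := by
  have hn0 : (0:ℝ) < n := by exact_mod_cast hn
  set a : ℕ → ℝ := fun k => (k:ℝ)/n with ha
  have key : ∀ k, Set.EqOn (stepf p q h n) (fun _ => stepv p q h n (k+1))
      (Set.Ioc (a k) (a (k+1))) := by
    intro k t ht
    have h1 : (k:ℝ) < (n:ℝ)*t := by
      rw [Set.mem_Ioc, ha] at ht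
      have := ht.1
      calc (k:ℝ) = n * ((k:ℝ)/n) := by field_simp
        _ < n * t := by exact mul_lt_mul_of_pos_left this hn0
    have h2 : (n:ℝ)*t ≤ (k:ℝ)+1 := by
      rw [Set.mem_Ioc, ha] at ht
      have := ht.2
      have h2' : t ≤ ((k:ℝ)+1)/n := by
        refine this.trans_eq ?_
        push_cast; ring_nf
      calc (n:ℝ)*t ≤ n * (((k:ℝ)+1)/n) := mul_le_mul_of_nonneg_left h2' hn0.le
        _ = (k:ℝ)+1 := by field_simp
    have : ⌈(n:ℝ)*t⌉₊ = k+1 := by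
      rw [Nat.ceil_eq_iff (Nat.succ_ne_zero k)]
      push_cast
      exact ⟨by simpa using h1, by simpa using h2⟩
    simp only [stepf, this]
  have hii : ∀ k, k < n → IntervalIntegrable (stepf p q h n) volume (a k) (a (k+1)) := by
    intro k _
    have hle : a k ≤ a (k+1) := by
      simp only [ha]
      have : (k:ℝ) ≤ (k:ℝ)+1 := by linarith
      gcongr
      push_cast; linarith
    rw [intervalIntegrable_iff, Set.uIoc_of_le hle]
    exact (integrableOn_const (measure_Ioc_lt_top).ne).congr_fun
      (fun t ht => (key k ht).symm) measurableSet_Ioc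
  have hsum := intervalIntegral.sum_integral_adjacent_intervals hii
  have heval : ∀ k ∈ Finset.range n, (∫ t in (a k)..(a (k+1)), stepf p q h n t)
      = (1/(n:ℝ)) * stepv p q h n (k+1) := by
    intro k _
    have hle : a k ≤ a (k+1) := by
      simp only [ha]
      have : (k:ℝ) ≤ (k:ℝ)+1 := by linarith
      gcongr
      push_cast; linarith
    rw [intervalIntegral.integral_of_le hle,
      setIntegral_congr_fun measurableSet_Ioc (key k), setIntegral_const,
      measureReal_def, Real.volume_Ioc, smul_eq_mul]
    congr 1
    rw [ENNReal.toReal_ofReal (by linarith)]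
    rw [ha]; push_cast; field_simp; ring
  rw [Finset.sum_congr rfl heval] at hsum
  have ha0 : a 0 = 0 := by simp [ha]
  have han : a n = 1 := by rw [ha]; exact div_self hn0.ne'
  rw [ha0, han] at hsum
  rw [← intervalIntegral.integral_of_le (by norm_num : (0:ℝ) ≤ 1), ← hsum, ← Finset.mul_sum]
  congr 1
  have e1 : ∑ k ∈ Finset.range n, stepv p q h n (k+1)
      = ∑ j ∈ Finset.Ico 1 (n+1), stepv p q h n j := by
    rw [Finset.sum_Ico_eq_sum_range]
    simp [add_comm]
  rw [e1, ← Finset.sum_subset (show Finset.Ioo 0 n ⊆ Finset.Ico 1 (n+1) by intro x; simp; omega)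
    (fun x _ hnx => by rw [stepv, if_neg hnx])]
  exact Finset.sum_congr rfl fun j hj => by rw [stepv, if_pos hj]

lemma beta_eqon' {p q : ℝ} : True := trivial

lemma riemann_conv {p q c : ℝ} (hp : 0 < p) (hp1 : p ≤ 1) (hq : 0 < q)
    {h : ℕ → ℝ} (hh : Tendsto h atTop (nhds c))
    (hbeta : IntegrableOn (fun t : ℝ => t ^ (p-1) * (1-t) ^ (q-1)) (Set.Ioc 0 1))
    {B : ℝ} (hB : ∫ t in Set.Ioc (0:ℝ) 1, t ^ (p-1) * (1-t) ^ (q-1) = B) :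
    Tendsto (fun n : ℕ => (1/(n:ℝ)) * ∑ j ∈ Finset.Ioo 0 n,
        ((j:ℝ)/n) ^ (p-1) * (((n-j : ℕ):ℝ)/n) ^ (q-1) * h (n-j))
      atTop (nhds (c * B)) := by
  obtain ⟨M, hMub⟩ := (hh.abs.bddAbove_range : BddAbove (Set.range fun k => |h k|))
  have hM : ∀ k, |h k| ≤ M := fun k => hMub (Set.mem_range_self k)
  have hM0 : 0 ≤ M := (abs_nonneg _).trans (hM 0)
  set D : ℝ → ℝ := fun t => (M * (1 + 2 ^ (1-q))) * (t ^ (p-1) * (1-t) ^ (q-1)) with hD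
  have hmeas : ∀ n : ℕ, AEStronglyMeasurable (stepf p q h n)
      ((volume : Measure ℝ).restrict (Set.Ioo 0 1)) := by
    intro n
    exact (Measurable.of_discrete.comp
      ((Nat.measurable_ceil).comp (measurable_const_mul _))).aestronglyMeasurable
  have hDint : Integrable D ((volume : Measure ℝ).restrict (Set.Ioo 0 1)) :=
    ((hbeta.mono_set Set.Ioo_subset_Ioc_self).const_mul _)
  have h_bound : ∀ n : ℕ, ∀ᵐ t ∂((volume : Measure ℝ).restrict (Set.Ioo 0 1)),
      ‖stepf p q h n t‖ ≤ D t := by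
    intro n
    filter_upwards [ae_restrict_mem measurableSet_Ioo] with t ht
    obtain ⟨ht0, ht1⟩ := ht
    by_cases hcond : ⌈(n:ℝ)*t⌉₊ ∈ Finset.Ioo 0 n
    case neg =>
      rw [stepf, stepv, if_neg hcond, norm_zero]
      exact mul_nonneg (mul_nonneg hM0 (by positivity))
        (mul_nonneg (Real.rpow_nonneg ht0.le _) (Real.rpow_nonneg (by linarith) _))
    case pos =>
      set j := ⌈(n:ℝ)*t⌉₊ with hjd
      have hcond' := Finset.mem_Ioo.mp hcond
      obtain ⟨hj0, hjn⟩ := hcond'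
      have hn0 : (0:ℝ) < n := by exact_mod_cast lt_trans hj0 hjn
      have hjt : (n:ℝ)*t ≤ j := Nat.le_ceil _
      have hjt2 : (j:ℝ) < (n:ℝ)*t + 1 := Nat.ceil_lt_add_one (by positivity)
      have htj : t ≤ (j:ℝ)/n := by rw [le_div_iff₀ hn0]; linarith
      have hkr : ((n - j:ℕ):ℝ) = (n:ℝ) - j := by
        rw [Nat.cast_sub hjn.le]
      have hk1 : 1 ≤ n - j := by omega
      have hb1 : ((j:ℝ)/n) ^ (p-1) ≤ t ^ (p-1) :=
        Real.rpow_le_rpow_of_nonpos ht0 htj (by linarith)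
      have hb2 : (((n-j:ℕ):ℝ)/n) ^ (q-1) ≤ (1 + 2 ^ (1-q)) * (1-t) ^ (q-1) := by
        rcases le_or_gt q 1 with hq1 | hq1
        · have hhalf : (1-t)/2 ≤ ((n-j:ℕ):ℝ)/n := by
            rw [div_le_div_iff₀ two_pos hn0]
            have h1 : (n:ℝ)*(1-t) - 1 < ((n-j:ℕ):ℝ) := by rw [hkr]; nlinarith
            have h2 : (1:ℝ) ≤ ((n-j:ℕ):ℝ) := by exact_mod_cast hk1
            rcases le_or_gt ((n:ℝ)*(1-t)) 2 with hc | hc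
            · nlinarith
            · nlinarith
          calc (((n-j:ℕ):ℝ)/n) ^ (q-1) ≤ ((1-t)/2) ^ (q-1) :=
              Real.rpow_le_rpow_of_nonpos (by linarith) hhalf (by linarith)
            _ = (1-t) ^ (q-1) * 2 ^ (1-q) := by
                rw [Real.div_rpow (by linarith) (by norm_num), div_eq_mul_inv,
                  ← Real.rpow_neg (by norm_num)]
                ring_nf
            _ ≤ (1 + 2 ^ (1-q)) * (1-t) ^ (q-1) := by
                have h0 : 0 ≤ (1-t) ^ (q-1) := Real.rpow_nonneg (by linarith) _
                nlinarith
        · have hkn : ((n-j:ℕ):ℝ)/n ≤ 1 - t := by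
            rw [div_le_iff₀ hn0, hkr]; nlinarith
          calc (((n-j:ℕ):ℝ)/n) ^ (q-1) ≤ (1-t) ^ (q-1) :=
              Real.rpow_le_rpow (by positivity) hkn (by linarith)
            _ ≤ (1 + 2 ^ (1-q)) * (1-t) ^ (q-1) := by
                have h0 : 0 ≤ (1-t) ^ (q-1) := Real.rpow_nonneg (by linarith) _
                nlinarith [Real.rpow_pos_of_pos (two_pos (α := ℝ)) (1-q)]
      rw [stepf, stepv, if_pos hcond]
      have h1n : 0 ≤ ((j:ℝ)/n) ^ (p-1) := Real.rpow_nonneg (by positivity) _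
      have h2n : 0 ≤ (((n-j:ℕ):ℝ)/n) ^ (q-1) := Real.rpow_nonneg (by positivity) _
      have hB1 : 0 ≤ t ^ (p-1) := Real.rpow_nonneg ht0.le _
      have hB2 : 0 ≤ (1 + 2 ^ (1-q)) * (1-t) ^ (q-1) :=
        mul_nonneg (by positivity) (Real.rpow_nonneg (by linarith) _)
      rw [Real.norm_eq_abs, abs_mul, abs_mul, abs_of_nonneg h1n, abs_of_nonneg h2n]
      calc ((j:ℝ)/n) ^ (p-1) * ((((n-j:ℕ):ℝ))/n) ^ (q-1) * |h (n-j)|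
          ≤ (t ^ (p-1) * ((1 + 2 ^ (1-q)) * (1-t) ^ (q-1))) * M :=
            mul_le_mul (mul_le_mul hb1 hb2 h2n hB1) (hM _) (abs_nonneg _)
              (mul_nonneg hB1 hB2)
        _ = (M * (1 + 2 ^ (1-q))) * (t ^ (p-1) * (1-t) ^ (q-1)) := by ring
  have h_lim : ∀ᵐ t ∂((volume : Measure ℝ).restrict (Set.Ioo 0 1)),
      Tendsto (fun n : ℕ => stepf p q h n t) atTop
        (nhds (t ^ (p-1) * (1-t) ^ (q-1) * c)) := by
    filter_upwards [ae_restrict_mem measurableSet_Ioo] with t ht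
    obtain ⟨ht0, ht1⟩ := ht
    set jf : ℕ → ℕ := fun n => ⌈(n:ℝ)*t⌉₊ with hjf
    have hlin : Tendsto (fun n : ℕ => (n:ℝ)*(1-t)) atTop atTop :=
      tendsto_natCast_atTop_atTop.atTop_mul_const (by linarith)
    have hev : ∀ᶠ n : ℕ in atTop, 0 < jf n ∧ jf n < n := by
      filter_upwards [hlin.eventually_ge_atTop 2, eventually_ge_atTop 1] with n hn2 hn1
      have hn0 : (0:ℝ) < n := by exact_mod_cast hn1
      refine ⟨Nat.ceil_pos.mpr (by positivity), ?_⟩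
      have h1 : (jf n : ℝ) < (n:ℝ)*t + 1 := Nat.ceil_lt_add_one (by positivity)
      have : (jf n : ℝ) < n := by nlinarith
      exact_mod_cast this
    have hc1 : Tendsto (fun n : ℕ => (jf n : ℝ)/n) atTop (nhds t) := by
      have hup : Tendsto (fun n : ℕ => t + 1/(n:ℝ)) atTop (nhds t) := by
        simpa using (tendsto_const_nhds (x := t)).add (tendsto_one_div_atTop_nhds_zero_nat (𝕜 := ℝ))
      apply tendsto_of_tendsto_of_tendsto_of_le_of_le' tendsto_const_nhds hup
      · filter_upwards [eventually_ge_atTop 1] with n hn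
        have hn0 : (0:ℝ) < n := by exact_mod_cast hn
        rw [le_div_iff₀ hn0, mul_comm]
        exact Nat.le_ceil _
      · filter_upwards [eventually_ge_atTop 1] with n hn
        have hn0 : (0:ℝ) < n := by exact_mod_cast hn
        rw [div_le_iff₀ hn0]
        have h1 := (Nat.ceil_lt_add_one (show (0:ℝ) ≤ (n:ℝ)*t by positivity)).le
        calc (jf n:ℝ) ≤ (n:ℝ)*t+1 := h1
          _ = (t + 1/n)*n := by field_simp
    have hc2 : Tendsto (fun n : ℕ => ((n - jf n : ℕ):ℝ)/n) atTop (nhds (1-t)) := by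
      apply (tendsto_const_nhds.sub hc1).congr'
      filter_upwards [hev, eventually_ge_atTop 1] with n hn hn1
      have hn0 : (0:ℝ) < n := by exact_mod_cast hn1
      rw [Nat.cast_sub hn.2.le]
      field_simp
    have hc3 : Tendsto (fun n : ℕ => n - jf n) atTop atTop := by
      rw [← tendsto_natCast_atTop_iff (R := ℝ)]
      apply tendsto_atTop_mono' _ _ (tendsto_atTop_add_const_right atTop (-1) hlin)
      filter_upwards [hev] with n hn
      have h1 : (jf n : ℝ) < (n:ℝ)*t + 1 := Nat.ceil_lt_add_one
        (by positivity)
      rw [Nat.cast_sub hn.2.le]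
      nlinarith
    have hrp1 : Tendsto (fun n : ℕ => ((jf n:ℝ)/n) ^ (p-1)) atTop (nhds (t ^ (p-1))) :=
      ((Real.continuousAt_rpow_const t (p-1) (Or.inl ht0.ne')).tendsto).comp hc1
    have hrp2 : Tendsto (fun n : ℕ => (((n - jf n:ℕ):ℝ)/n) ^ (q-1)) atTop
        (nhds ((1-t) ^ (q-1))) :=
      ((Real.continuousAt_rpow_const (1-t) (q-1)
        (Or.inl (by linarith : (0:ℝ) < 1-t).ne')).tendsto).comp hc2
    have hht : Tendsto (fun n : ℕ => h (n - jf n)) atTop (nhds c) := hh.comp hc3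
    apply ((hrp1.mul hrp2).mul hht).congr'
    filter_upwards [hev] with n hn
    rw [stepf, stepv, if_pos (Finset.mem_Ioo.mpr hn)]
  have hdct := tendsto_integral_of_dominated_convergence D hmeas hDint h_bound h_lim
  have hI : (∫ t in Set.Ioo (0:ℝ) 1, t ^ (p-1) * (1-t) ^ (q-1) * c) = c * B := by
    rw [← hB, ← integral_Ioc_eq_integral_Ioo]
    rw [show (fun t : ℝ => t ^ (p-1) * (1-t) ^ (q-1) * c)
        = fun t : ℝ => c * (t ^ (p-1) * (1-t) ^ (q-1)) from funext fun t => by ring]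
    exact integral_const_mul c _
  rw [hI] at hdct
  apply hdct.congr'
  filter_upwards [eventually_ge_atTop 1] with n hn
  rw [← integral_Ioc_eq_integral_Ioo, stepf_integral p q h hn]

lemma conv_asymp {p q c : ℝ} (hp : 0 < p) (hp1 : p ≤ 1) (hq : 0 < q)
    {u x : ℕ → ℝ} (hu : ∀ n : ℕ, u n = if n = 0 then 0 else (n:ℝ) ^ (p-1))
    (hx0 : x 0 = 0)
    (hx : Tendsto (fun k : ℕ => x k / (k:ℝ) ^ (q-1)) atTop (nhds c)) :
    Tendsto (fun n : ℕ => seqConv u x n / (n:ℝ) ^ (p+q-1)) atTop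
      (nhds (c * (Real.Gamma p * Real.Gamma q / Real.Gamma (p+q)))) := by
  have hriem := riemann_conv hp hp1 hq hx (beta_integrableOn hp hq) (beta_value hp hq)
  apply hriem.congr'
  filter_upwards [eventually_ge_atTop 1] with n hn
  have hn0 : (0:ℝ) < n := by exact_mod_cast hn
  rw [seqConv]
  have hs : ∑ j ∈ Finset.range (n+1), u j * x (n-j)
      = ∑ j ∈ Finset.Ioo 0 n, (j:ℝ) ^ (p-1) * x (n-j) := by
    rw [← Finset.sum_subset
        (show Finset.Ioo 0 n ⊆ Finset.range (n+1) by intro x hx; simp at hx ⊢; omega)]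
    · exact Finset.sum_congr rfl fun j hj => by
        rw [hu j, if_neg (by simp at hj; omega)]
    · intro j hjr hj
      simp only [Finset.mem_range] at hjr
      simp only [Finset.mem_Ioo] at hj
      rcases Nat.eq_zero_or_pos j with h0 | h0
      · rw [h0, hu 0, if_pos rfl, zero_mul]
      · have : j = n := by omega
        rw [this, Nat.sub_self, hx0, mul_zero]
  rw [hs, Finset.mul_sum, Finset.sum_div]
  apply Finset.sum_congr rfl
  intro j hj
  simp only [Finset.mem_Ioo] at hj
  have hj0 : (0:ℝ) < j := by exact_mod_cast hj.1
  have hnj : 1 ≤ n - j := by omega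
  have hnj0 : (0:ℝ) < ((n-j:ℕ):ℝ) := by exact_mod_cast hnj
  have e1 : ((j:ℝ)/n) ^ (p-1) = (j:ℝ) ^ (p-1) / (n:ℝ) ^ (p-1) :=
    Real.div_rpow hj0.le hn0.le _
  have e2 : (((n-j:ℕ):ℝ)/n) ^ (q-1) = ((n-j:ℕ):ℝ) ^ (q-1) / (n:ℝ) ^ (q-1) :=
    Real.div_rpow hnj0.le hn0.le _
  have e3 : (n:ℝ) ^ (p+q-1) = (n:ℝ) ^ (p-1) * (n:ℝ) ^ (q-1) * n := by
    rw [← Real.rpow_add hn0, ← Real.rpow_add_one hn0.ne']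
    ring_nf
  rw [e1, e2, e3]
  have b1 : ((n-j:ℕ):ℝ) ^ (q-1) ≠ 0 := (Real.rpow_pos_of_pos hnj0 _).ne'
  have b2 : (n:ℝ) ^ (p-1) ≠ 0 := (Real.rpow_pos_of_pos hn0 _).ne'
  have b3 : (n:ℝ) ^ (q-1) ≠ 0 := (Real.rpow_pos_of_pos hn0 _).ne'
  field_simp

lemma convPow_one (a : ℕ → ℝ) : convPow a 1 = a := by
  funext n
  show seqConv a (convPow a 0) n = a n
  rw [seqConv, Finset.sum_eq_single n]
  · simp [convPow]
  · intro j hj hne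
    have : n - j ≠ 0 := by simp at hj; omega
    simp [convPow, this]
  · intro hn; exact absurd (Finset.self_mem_range_succ n) hn

lemma convPow_eq_zero {a : ℕ → ℝ} (ha0 : a 0 = 0) :
    ∀ m : ℕ, 1 ≤ m → ∀ k : ℕ, k < m → convPow a m k = 0 := by
  intro m
  induction m with
  | zero => intro h; omega
  | succ m ih =>
    intro _ k hk
    show seqConv a (convPow a m) k = 0
    rw [seqConv]
    apply Finset.sum_eq_zero
    intro j hj
    simp only [Finset.mem_range] at hj
    rcases Nat.eq_zero_or_pos j with h0 | h0
    · rw [h0, ha0, zero_mul]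
    · rcases Nat.eq_zero_or_pos m with hm0 | hm0
      · subst hm0; omega
      · rw [ih hm0 (k-j) (by omega), mul_zero]

lemma convPow_asymp {α : ℝ} (hα : 1 < α) {a : ℕ → ℝ}
    (ha : ∀ n : ℕ, a n = if n = 0 then 0 else (n:ℝ) ^ (1/α - 1)) :
    ∀ m : ℕ, 1 ≤ m →
      Tendsto (fun k : ℕ => convPow a m k / (k:ℝ) ^ ((m:ℝ)/α - 1)) atTop
        (nhds (Real.Gamma (1/α) ^ m / Real.Gamma ((m:ℝ)/α))) := by
  have hα0 : (0:ℝ) < α := by linarith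
  have hp : 0 < 1/α := by positivity
  have hp1 : 1/α ≤ 1 := by rw [div_le_one hα0]; linarith
  have hΓp : Real.Gamma (1/α) ≠ 0 := (Real.Gamma_pos_of_pos hp).ne'
  have ha0 : a 0 = 0 := by rw [ha 0]; simp
  intro m
  induction m with
  | zero => intro h; omega
  | succ m ih =>
    intro _
    rcases Nat.eq_zero_or_pos m with hm0 | hm0
    · subst hm0
      have hval : Real.Gamma (1/α) ^ (0+1) / Real.Gamma (((0+1:ℕ):ℝ)/α) = 1 := by
        rw [show (((0+1:ℕ):ℝ))/α = 1/α by norm_num, pow_one, div_self hΓp]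
      have hev : ∀ᶠ k : ℕ in atTop,
          Real.Gamma (1/α) ^ (0+1) / Real.Gamma (((0+1:ℕ):ℝ)/α)
            = convPow a (0+1) k / (k:ℝ) ^ (((0+1:ℕ):ℝ)/α - 1) := by
        filter_upwards [eventually_ge_atTop 1] with k hk
        have hk0 : (0:ℝ) < k := by exact_mod_cast hk
        rw [hval, show ((0:ℕ)+1) = 1 from rfl, convPow_one, ha k, if_neg (by omega),
          show (((0+1:ℕ):ℝ))/α - 1 = 1/α - 1 by norm_num,
          div_self (Real.rpow_pos_of_pos hk0 _).ne']
      exact tendsto_const_nhds.congr' hev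
    · have hmr : (0:ℝ) < m := by exact_mod_cast hm0
      have hq : 0 < (m:ℝ)/α := by positivity
      have hΓq : Real.Gamma ((m:ℝ)/α) ≠ 0 := (Real.Gamma_pos_of_pos hq).ne'
      have hx0 : convPow a m 0 = 0 := convPow_eq_zero ha0 m hm0 0 hm0
      have hstep := conv_asymp hp hp1 hq (u := a) ha hx0 (ih hm0)
      have hexp : 1/α + (m:ℝ)/α - 1 = (((m+1:ℕ)):ℝ)/α - 1 := by push_cast; ring
      rw [hexp] at hstep
      have hcon : Real.Gamma (1/α) ^ m / Real.Gamma ((m:ℝ)/α) *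
            (Real.Gamma (1/α) * Real.Gamma ((m:ℝ)/α) / Real.Gamma (1/α + (m:ℝ)/α))
          = Real.Gamma (1/α) ^ (m+1) / Real.Gamma ((((m+1:ℕ)):ℝ)/α) := by
        have h2 : 1/α + (m:ℝ)/α = (((m+1:ℕ)):ℝ)/α := by push_cast; ring
        rw [h2]
        have h3 : Real.Gamma ((((m+1:ℕ)):ℝ)/α) ≠ 0 := by
          apply (Real.Gamma_pos_of_pos ?_).ne'
          positivity
        field_simp
        ring
      rw [hcon] at hstep
      exact hstep


end AuxProof

/-- For `α > 1` and `a_n = n^{1/α − 1}` (with `a_0 = 0`), the `m`-fold convolution partial sums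
satisfy `lim_n n^{-m/α} Σ_{k=m}^n a^{*m}_k = α Γ(1/α)^m / (m Γ(m/α))`. -/
theorem convPow_partial_sums_limit (α : ℝ) (hα : 1 < α) (m : ℕ) (hm : 1 ≤ m)
    (a : ℕ → ℝ) (ha : ∀ n : ℕ, a n = if n = 0 then 0 else (n : ℝ) ^ (1 / α - 1)) :
    Tendsto (fun n : ℕ => ((n : ℝ) ^ ((m : ℝ) / α))⁻¹ * ∑ k ∈ Finset.Icc m n, convPow a m k)
      atTop (nhds (α * Real.Gamma (1 / α) ^ m / (m * Real.Gamma ((m : ℝ) / α)))) := by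
  have hα0 : (0:ℝ) < α := by linarith
  have hmr : (0:ℝ) < m := by exact_mod_cast hm
  have hq : 0 < (m:ℝ)/α := by positivity
  have hΓq : Real.Gamma ((m:ℝ)/α) ≠ 0 := (Real.Gamma_pos_of_pos hq).ne'
  have ha0 : a 0 = 0 := by rw [ha 0]; simp
  have hx := convPow_asymp hα ha m hm
  have hx0 : convPow a m 0 = 0 := convPow_eq_zero ha0 m hm 0 hm
  have hu : ∀ n : ℕ, (fun n : ℕ => if n = 0 then (0:ℝ) else (n:ℝ) ^ ((1:ℝ)-1)) n
      = if n = 0 then (0:ℝ) else (n:ℝ) ^ ((1:ℝ)-1) := fun n => rfl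
  have hC := conv_asymp one_pos le_rfl hq hu hx0 hx
  rw [show (1:ℝ) + (m:ℝ)/α - 1 = (m:ℝ)/α by ring] at hC
  have hterm2 : Tendsto (fun n : ℕ => convPow a m n / (n:ℝ) ^ ((m:ℝ)/α)) atTop (nhds 0) := by
    have h2 := hx.mul tendsto_one_div_atTop_nhds_zero_nat
    rw [mul_zero] at h2
    apply h2.congr'
    filter_upwards [eventually_ge_atTop 1] with n hn
    have hn0 : (0:ℝ) < n := by exact_mod_cast hn
    rw [div_mul_div_comm, mul_one, show (m:ℝ)/α = ((m:ℝ)/α - 1) + 1 by ring,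
      Real.rpow_add_one hn0.ne']
    ring_nf
  have hsum := hC.add hterm2
  rw [add_zero] at hsum
  have hval : Real.Gamma (1/α) ^ m / Real.Gamma ((m:ℝ)/α) *
        (Real.Gamma 1 * Real.Gamma ((m:ℝ)/α) / Real.Gamma (1 + (m:ℝ)/α))
      = α * Real.Gamma (1/α) ^ m / ((m:ℝ) * Real.Gamma ((m:ℝ)/α)) := by
    rw [Real.Gamma_one, add_comm, Real.Gamma_add_one hq.ne']
    field_simp
  rw [hval] at hsum
  apply hsum.congr'
  filter_upwards [eventually_ge_atTop (max m 1)] with n hn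
  have hnm : m ≤ n := le_trans (le_max_left _ _) hn
  have hn1 : 1 ≤ n := le_trans (le_max_right _ _) hn
  have hn0 : (0:ℝ) < n := by exact_mod_cast hn1
  have hseq : seqConv (fun n : ℕ => if n = 0 then (0:ℝ) else (n:ℝ) ^ ((1:ℝ)-1))
      (convPow a m) n = ∑ k ∈ Finset.range n, convPow a m k := by
    rw [seqConv, Finset.sum_range_succ']
    simp only [if_pos rfl, zero_mul, add_zero]
    have : ∀ i ∈ Finset.range n,
        (if i+1 = 0 then (0:ℝ) else ((i+1:ℕ):ℝ) ^ ((1:ℝ)-1)) * convPow a m (n-(i+1))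
          = convPow a m (n-1-i) := by
      intro i _
      rw [if_neg (Nat.succ_ne_zero i), sub_self, Real.rpow_zero, one_mul,
        show n-(i+1) = n-1-i by omega]
    rw [Finset.sum_congr rfl this, Finset.sum_range_reflect]
    simp
  have hicc : ∑ k ∈ Finset.Icc m n, convPow a m k
      = ∑ k ∈ Finset.range n, convPow a m k + convPow a m n := by
    rw [← Finset.sum_range_succ]
    apply Finset.sum_subset ?_ ?_
    · intro k hk
      rw [Finset.mem_Icc] at hk
      rw [Finset.mem_range]
      omega
    · intro k hk1 hk2
      rw [Finset.mem_range] at hk1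
      have hkm : k < m := by
        by_contra hcon
        exact hk2 (Finset.mem_Icc.mpr ⟨by omega, by omega⟩)
      exact convPow_eq_zero ha0 m hm k hkm
  rw [hicc, inv_mul_eq_div, ← hseq, add_div]
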